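/- For every integer D ≥ 12, the (D−11)×(D−11) real symmetric matrix M = (M_{ab}) indexed by integers a, b with 4 ≤ a, b ≤ D − 8 and entries M_{ab} = min(a,b) − 3 − (a−1)(b−1)/(D−2) is positive definite. -/

import Mathlib

open scoped BigOperators

/-- For `D ≥ 12`, the `(D−11)×(D−11)` Gram-type matrix with entries
`M_{ab} = min(a,b) − 3 − (a−1)(b−1)/(D−2)`, indexed by `a, b ∈ {4, …, D−8}`,
is positive definite. -/
theorem stmt2 (D : ℕ) (hD : 12 ≤ D)
    (M : Matrix (Fin (D - 11)) (Fin (D - 11)) ℝ)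
    (hM : ∀ i j : Fin (D - 11),
      M i j = ((min ((i : ℕ) + 4) ((j : ℕ) + 4) : ℕ) : ℝ) - 3
        - ((((i : ℕ) + 4 : ℕ) : ℝ) - 1) * ((((j : ℕ) + 4 : ℕ) : ℝ) - 1) / ((D : ℝ) - 2)) :
    M.PosDef := by
  have hn1 : 1 ≤ D - 11 := by omega
  have hDR : (12:ℝ) ≤ (D:ℝ) := by exact_mod_cast hD
  have hD2 : (0:ℝ) < (D:ℝ) - 2 := by linarith
  have hnD : ((D - 11 : ℕ):ℝ) = (D:ℝ) - 11 := by
    push_cast [Nat.cast_sub (by omega : 11 ≤ D)]; ring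
  set e : ℕ → Fin (D - 11) → ℝ := fun k a => if k ≤ (a:ℕ) then 1 else 0 with he
  set c : ℕ → ℝ := fun k => if k = 0 then 3 else 1 with hc
  -- counting lemma
  have count : ∀ m : ℕ, m < D - 11 →
      (∑ k ∈ Finset.range (D - 11), (if k ≤ m then (1:ℝ) else 0)) = (m:ℝ) + 1 := by
    intro m hm
    rw [← Finset.sum_filter]
    have hfil : (Finset.range (D - 11)).filter (fun k => k ≤ m) = Finset.range (m+1) := by
      ext k; simp [Nat.lt_succ_iff]; omega
    rw [hfil, Finset.sum_const, Finset.card_range]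
    push_cast; ring
  -- entry decompositions
  have hA : ∀ i j : Fin (D - 11),
      ((min ((i : ℕ) + 4) ((j : ℕ) + 4) : ℕ) : ℝ) - 3
        = ∑ k ∈ Finset.range (D - 11), e k i * e k j := by
    intro i j
    have h1 : ∀ k, e k i * e k j = if k ≤ min (i:ℕ) (j:ℕ) then (1:ℝ) else 0 := by
      intro k
      simp only [he, le_min_iff]
      by_cases h1 : k ≤ (i:ℕ) <;> by_cases h2 : k ≤ (j:ℕ) <;> simp [h1, h2]
    simp only [h1]
    rw [count _ (by omega : min (i:ℕ) (j:ℕ) < D - 11)]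
    have : min ((i:ℕ)+4) ((j:ℕ)+4) = min (i:ℕ) (j:ℕ) + 4 := by omega
    rw [this]; push_cast; ring
  have hB : ∀ i : Fin (D - 11),
      (((i : ℕ) + 4 : ℕ) : ℝ) - 1 = ∑ k ∈ Finset.range (D - 11), c k * e k i := by
    intro i
    have h1 : ∀ k, c k * e k i = (if k ≤ (i:ℕ) then (1:ℝ) else 0)
        + (if k = 0 then (2:ℝ) else 0) := by
      intro k
      simp only [hc, he]
      rcases Nat.eq_zero_or_pos k with hk | hk
      · subst hk; norm_num
      · have : k ≠ 0 := by omega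
        by_cases h2 : k ≤ (i:ℕ) <;> simp [this, h2]
    simp only [h1, Finset.sum_add_distrib]
    rw [count _ i.isLt, Finset.sum_ite_eq' (Finset.range (D - 11)) 0 (fun _ => (2:ℝ))]
    simp only [Finset.mem_range]
    rw [if_pos (by omega : 0 < D - 11)]
    push_cast; ring
  rw [Matrix.posDef_iff_dotProduct_mulVec]
  constructor
  · -- Hermitian
    ext i j
    simp only [Matrix.conjTranspose_apply, star_trivial, hM i j, hM j i]
    rw [min_comm]; ring
  · intro x hx
    -- partial sums
    set S : ℕ → ℝ := fun k => ∑ a : Fin (D - 11), e k a * x a with hS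
    have hSge : ∀ m : ℕ, D - 11 ≤ m → S m = 0 := by
      intro m hm
      apply Finset.sum_eq_zero
      intro a _
      have : ¬ m ≤ (a:ℕ) := by have := a.isLt; omega
      simp [he, this]
    have hxk : ∀ (k : ℕ) (hk : k < D - 11), x ⟨k, hk⟩ = S k - S (k+1) := by
      intro k hk
      simp only [hS, ← Finset.sum_sub_distrib]
      rw [Finset.sum_eq_single (⟨k, hk⟩ : Fin (D - 11))]
      · simp [he]
      · intro b _ hb
        have hbk : (b:ℕ) ≠ k := by
          intro h; exact hb (by ext; exact h)
        simp only [he]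
        by_cases h1 : k ≤ (b:ℕ) <;> by_cases h2 : k+1 ≤ (b:ℕ) <;>
          simp [h1, h2] <;> omega
      · intro h; exact absurd (Finset.mem_univ _) h
    -- the quadratic form
    have hQ : dotProduct (star x) (M.mulVec x)
        = (∑ k ∈ Finset.range (D - 11), (S k)^2)
          - (∑ k ∈ Finset.range (D - 11), c k * S k)^2 / ((D:ℝ) - 2) := by
      have step1 : dotProduct (star x) (M.mulVec x)
          = ∑ i : Fin (D - 11), ∑ j : Fin (D - 11),
              ((x i * x j) * ∑ k ∈ Finset.range (D - 11), e k i * e k j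
                - (x i * x j) * ((∑ k ∈ Finset.range (D - 11), c k * e k i)
                    * (∑ k ∈ Finset.range (D - 11), c k * e k j)) / ((D:ℝ) - 2)) := by
        simp only [dotProduct, Matrix.mulVec, star_trivial]
        apply Finset.sum_congr rfl; intro i _
        rw [Finset.mul_sum]
        apply Finset.sum_congr rfl; intro j _
        rw [hM i j, hA i j, hB i, hB j]
        ring
      have t1 : (∑ i : Fin (D - 11), ∑ j : Fin (D - 11),
            (x i * x j) * ∑ k ∈ Finset.range (D - 11), e k i * e k j)
          = ∑ k ∈ Finset.range (D - 11), (S k)^2 := by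
        have h1 : ∀ i : Fin (D - 11), (∑ j : Fin (D - 11),
            (x i * x j) * ∑ k ∈ Finset.range (D - 11), e k i * e k j)
            = ∑ k ∈ Finset.range (D - 11), ∑ j : Fin (D - 11),
                (e k i * x i) * (e k j * x j) := by
          intro i
          have h2 : ∀ j : Fin (D - 11), (x i * x j) * ∑ k ∈ Finset.range (D - 11), e k i * e k j
              = ∑ k ∈ Finset.range (D - 11), (e k i * x i) * (e k j * x j) := by
            intro j
            rw [Finset.mul_sum]
            exact Finset.sum_congr rfl fun k _ => by ring
          simp only [h2]
          exact Finset.sum_comm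
        simp only [h1]
        rw [Finset.sum_comm]
        apply Finset.sum_congr rfl; intro k _
        simp only [hS, sq, Finset.sum_mul_sum]
      have t2 : (∑ i : Fin (D - 11), (∑ k ∈ Finset.range (D - 11), c k * e k i) * x i)
          = ∑ k ∈ Finset.range (D - 11), c k * S k := by
        have h1 : ∀ i : Fin (D - 11), (∑ k ∈ Finset.range (D - 11), c k * e k i) * x i
            = ∑ k ∈ Finset.range (D - 11), c k * (e k i * x i) := by
          intro i
          rw [Finset.sum_mul]
          apply Finset.sum_congr rfl; intro k _; ring
        simp only [h1]
        rw [Finset.sum_comm]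
        apply Finset.sum_congr rfl; intro k _
        simp only [hS, Finset.mul_sum]
      have t3 : (∑ i : Fin (D - 11), ∑ j : Fin (D - 11),
            (x i * x j) * ((∑ k ∈ Finset.range (D - 11), c k * e k i)
              * (∑ k ∈ Finset.range (D - 11), c k * e k j)) / ((D:ℝ) - 2))
          = (∑ k ∈ Finset.range (D - 11), c k * S k)^2 / ((D:ℝ) - 2) := by
        rw [← t2, sq, Finset.sum_mul_sum, Finset.sum_div]
        apply Finset.sum_congr rfl; intro i _
        rw [Finset.sum_div]
        apply Finset.sum_congr rfl; intro j _
        ring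
      rw [step1]
      simp only [Finset.sum_sub_distrib]
      rw [t1, t3]
    -- sum of squares of c
    have hc2 : (∑ k ∈ Finset.range (D - 11), (c k)^2) = ((D - 11 : ℕ):ℝ) + 8 := by
      have h1 : ∀ k, (c k)^2 = 1 + (if k = 0 then (8:ℝ) else 0) := by
        intro k
        simp only [hc]
        by_cases h : k = 0 <;> simp [h] <;> norm_num
      simp only [h1, Finset.sum_add_distrib, Finset.sum_const, Finset.card_range,
        Finset.sum_ite_eq' (Finset.range (D - 11)) 0 (fun _ => (8:ℝ)), Finset.mem_range]
      rw [if_pos (by omega : 0 < D - 11)]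
      ring
    -- positivity of sum of squares of S
    have hSnn : (0:ℝ) ≤ ∑ k ∈ Finset.range (D - 11), (S k)^2 :=
      Finset.sum_nonneg fun k _ => sq_nonneg _
    have hSpos : 0 < ∑ k ∈ Finset.range (D - 11), (S k)^2 := by
      rcases hSnn.lt_or_eq with h | h
      · exact h
      · exfalso; apply hx
        have hall := (Finset.sum_eq_zero_iff_of_nonneg
          (fun k _ => sq_nonneg (S k))).mp h.symm
        funext i
        have hSz : ∀ m : ℕ, S m = 0 := by
          intro m
          by_cases hm : m < D - 11
          · exact sq_eq_zero_iff.mp (hall m (Finset.mem_range.mpr hm))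
          · exact hSge m (by omega)
        have h2 := hxk i.1 i.isLt
        simp only [hSz, sub_zero] at h2
        simpa using h2
    -- Cauchy-Schwarz
    have hcs := Finset.sum_mul_sq_le_sq_mul_sq (Finset.range (D - 11)) c S
    rw [hc2] at hcs
    -- conclude
    rw [hQ, sub_pos, div_lt_iff₀ hD2]
    calc (∑ k ∈ Finset.range (D - 11), c k * S k)^2
        ≤ (((D - 11:ℕ):ℝ) + 8) * ∑ k ∈ Finset.range (D - 11), (S k)^2 := hcs
      _ = ((D:ℝ) - 3) * ∑ k ∈ Finset.range (D - 11), (S k)^2 := by rw [hnD]; ring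
      _ < ((D:ℝ) - 2) * ∑ k ∈ Finset.range (D - 11), (S k)^2 := by nlinarith
      _ = (∑ k ∈ Finset.range (D - 11), (S k)^2) * ((D:ℝ) - 2) := by ring
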